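/- arXiv:1911.06199 — 6 statements merged into one kernel-verified Lean document; each statement's English description precedes it below -/
import Mathlib

section
/- Let F be a convex polytope contained in [0,1]^2 with vertex set V, and let g : F → ℝ be an affine function. Suppose for each v ∈ V, either g(v) = 0 or g(v) ≥ m for some m > 0. Let S = {x ∈ F : g(x) = 0} and assume S is nonempty. Then for every x ∈ F, g(x) ≥ m · d(x, S) / 2, where d(x, S) is the Euclidean distance from x to S. -/
open Metric Set

/-- Two points of the unit square are within distance 2 of each other. -/
lemma square_dist_le_two (a b : EuclideanSpace ℝ (Fin 2))
    (ha : ∀ i, a i ∈ Set.Icc (0:ℝ) 1) (hb : ∀ i, b i ∈ Set.Icc (0:ℝ) 1) :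
    dist a b ≤ 2 := by
  rw [EuclideanSpace.dist_eq]
  have hsum : ∑ i, dist (a i) (b i) ^ 2 ≤ 4 := by
    have h : ∀ i : Fin 2, dist (a i) (b i) ^ 2 ≤ 1 := by
      intro i
      have h1 := ha i
      have h2 := hb i
      rw [Real.dist_eq]
      simp only [Set.mem_Icc] at h1 h2
      rw [sq_abs]
      nlinarith [h1.1, h1.2, h2.1, h2.2]
    calc ∑ i, dist (a i) (b i) ^ 2 ≤ ∑ _i : Fin 2, (1:ℝ) :=
          Finset.sum_le_sum fun i _ => h i
      _ = 2 := by simp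
      _ ≤ 4 := by norm_num
  calc Real.sqrt (∑ i, dist (a i) (b i) ^ 2) ≤ Real.sqrt 4 := Real.sqrt_le_sqrt hsum
    _ = 2 := by
        rw [show (4:ℝ) = 2 ^ 2 by norm_num, Real.sqrt_sq (by norm_num : (0:ℝ) ≤ 2)]

theorem affine_min_value_estimate
    (V : Finset (EuclideanSpace ℝ (Fin 2)))
    (F : Set (EuclideanSpace ℝ (Fin 2)))
    (hF : F = convexHull ℝ (V : Set (EuclideanSpace ℝ (Fin 2))))
    (hFsq : F ⊆ {p | ∀ i, p i ∈ Set.Icc (0:ℝ) 1})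
    (g : EuclideanSpace ℝ (Fin 2) →ᵃ[ℝ] ℝ)
    (m : ℝ) (hm : 0 < m)
    (hvert : ∀ v ∈ V, g v = 0 ∨ m ≤ g v)
    (S : Set (EuclideanSpace ℝ (Fin 2)))
    (hS : S = {x ∈ F | g x = 0})
    (hSne : S.Nonempty) :
    ∀ x ∈ F, m * Metric.infDist x S / 2 ≤ g x := by
  classical
  have hSF : S ⊆ F := by rw [hS]; exact fun y hy => hy.1
  intro x hx
  set V0 : Finset (EuclideanSpace ℝ (Fin 2)) := V.filter (fun v => g v = 0) with hV0
  set V1 : Finset (EuclideanSpace ℝ (Fin 2)) := V.filter (fun v => ¬ g v = 0) with hV1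
  -- the convex hull of the zero vertices is contained in S
  have hzero : (convexHull ℝ (V0 : Set (EuclideanSpace ℝ (Fin 2)))) ⊆ S := by
    rw [hS]
    apply convexHull_min
    · intro v hv
      rw [Finset.mem_coe, hV0, Finset.mem_filter] at hv
      exact ⟨hF ▸ subset_convexHull ℝ _ (Finset.mem_coe.mpr hv.1), hv.2⟩
    · have heq : {x ∈ F | g x = 0} = F ∩ (g ⁻¹' {0}) := by
        ext y; simp [Set.mem_setOf_eq]
      rw [heq]
      exact (hF ▸ convex_convexHull ℝ _).inter ((convex_singleton (0:ℝ)).affine_preimage g)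
  -- decompose x as convex combination
  have hx' := hx
  rw [hF] at hx'
  obtain ⟨w, hw0, hw1, hwx⟩ := Finset.mem_convexHull'.mp hx'
  set t : ℝ := ∑ v ∈ V1, w v with ht
  set t' : ℝ := ∑ v ∈ V0, w v with ht'
  have htn : 0 ≤ t := Finset.sum_nonneg fun v hv => hw0 v (Finset.mem_filter.mp hv).1
  have ht'n : 0 ≤ t' := Finset.sum_nonneg fun v hv => hw0 v (Finset.mem_filter.mp hv).1
  have hsplit : t' + t = 1 := by
    rw [ht, ht', hV0, hV1]
    rw [Finset.sum_filter_add_sum_filter_not]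
    exact hw1
  -- g of a convex combination
  have hglin : ∀ y : EuclideanSpace ℝ (Fin 2), g y = g.linear y + g 0 := by
    intro y
    have := g.map_vadd 0 y
    simpa [vadd_eq_add] using this
  have hgx : g x = ∑ v ∈ V, w v * g v := by
    rw [hglin x, ← hwx, map_sum]
    have h1 : ∀ v ∈ V, g.linear (w v • v) = w v * g.linear v := by
      intro v _; rw [map_smul]; rfl
    rw [Finset.sum_congr rfl h1]
    have h2 : g 0 = ∑ v ∈ V, w v * g 0 := by
      rw [← Finset.sum_mul, hw1, one_mul]
    rw [h2, ← Finset.sum_add_distrib]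
    apply Finset.sum_congr rfl
    intro v _
    rw [hglin v]; ring
  -- g x ≥ m * t
  have hgxt : m * t ≤ g x := by
    rw [hgx, ← Finset.sum_filter_add_sum_filter_not V (fun v => g v = 0) (fun v => w v * g v)]
    have hz : ∑ v ∈ V.filter (fun v => g v = 0), w v * g v = 0 := by
      apply Finset.sum_eq_zero
      intro v hv
      rw [(Finset.mem_filter.mp hv).2, mul_zero]
    rw [hz, zero_add, ht, Finset.mul_sum]
    apply Finset.sum_le_sum
    intro v hv
    have hv' := Finset.mem_filter.mp hv
    have hgv : m ≤ g v := (hvert v hv'.1).resolve_left hv'.2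
    have hwv : 0 ≤ w v := hw0 v hv'.1
    calc m * w v = w v * m := mul_comm _ _
      _ ≤ w v * g v := mul_le_mul_of_nonneg_left hgv hwv
  -- distance bound : infDist x S ≤ 2 * t
  have hdist : Metric.infDist x S ≤ 2 * t := by
    have hxsum : x = (∑ v ∈ V0, w v • v) + ∑ v ∈ V1, w v • v := by
      rw [← hwx, hV0, hV1, Finset.sum_filter_add_sum_filter_not]
    rcases eq_or_lt_of_le htn with h0 | htpos
    · -- t = 0 : x ∈ S
      have hz1 : ∑ v ∈ V1, w v • v = 0 := by
        apply Finset.sum_eq_zero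
        intro v hv
        have : w v = 0 := by
          have := (Finset.sum_eq_zero_iff_of_nonneg
            (fun v hv => hw0 v (Finset.mem_filter.mp hv).1)).mp h0.symm v hv
          exact this
        rw [this, zero_smul]
      have hxS : x ∈ S := by
        apply hzero
        rw [Finset.mem_convexHull']
        refine ⟨w, fun v hv => hw0 v (Finset.mem_filter.mp hv).1, ?_, ?_⟩
        · rw [← ht']; linarith
        · rw [hxsum, hz1, add_zero]
      rw [Metric.infDist_zero_of_mem hxS]
      linarith
    · rcases eq_or_lt_of_le ht'n with h0' | ht'pos
      · -- t' = 0 : use any point of S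
        obtain ⟨s, hsS⟩ := hSne
        have hle : Metric.infDist x S ≤ dist x s := Metric.infDist_le_dist_of_mem hsS
        have hd2 : dist x s ≤ 2 :=
          square_dist_le_two x s (hFsq hx) (hFsq (hSF hsS))
        have : t = 1 := by linarith
        rw [this]; linarith
      · -- both masses positive
        set y0 : EuclideanSpace ℝ (Fin 2) := t'⁻¹ • ∑ v ∈ V0, w v • v with hy0
        set y1 : EuclideanSpace ℝ (Fin 2) := t⁻¹ • ∑ v ∈ V1, w v • v with hy1
        have hy0mem : y0 ∈ convexHull ℝ (V0 : Set (EuclideanSpace ℝ (Fin 2))) := by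
          have := Finset.centerMass_id_mem_convexHull V0
            (fun v hv => hw0 v (Finset.mem_filter.mp hv).1) (ht' ▸ ht'pos)
          simpa [Finset.centerMass, hy0, ht'] using this
        have hy1mem : y1 ∈ convexHull ℝ (V1 : Set (EuclideanSpace ℝ (Fin 2))) := by
          have := Finset.centerMass_id_mem_convexHull V1
            (fun v hv => hw0 v (Finset.mem_filter.mp hv).1) (ht ▸ htpos)
          simpa [Finset.centerMass, hy1, ht] using this
        have hy0S : y0 ∈ S := hzero hy0mem
        have hy1F : y1 ∈ F := by
          rw [hF]
          exact convexHull_mono (by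
            intro v hv
            rw [Finset.mem_coe, hV1, Finset.mem_filter] at hv
            exact Finset.mem_coe.mpr hv.1) hy1mem
        have hz0 : ∑ v ∈ V0, w v • v = t' • y0 := by
          rw [hy0, smul_inv_smul₀ (ne_of_gt ht'pos)]
        have hz1 : ∑ v ∈ V1, w v • v = t • y1 := by
          rw [hy1, smul_inv_smul₀ (ne_of_gt htpos)]
        have hxeq : x = t' • y0 + t • y1 := by rw [hxsum, hz0, hz1]
        have hsub : x - y0 = t • (y1 - y0) := by
          rw [hxeq, smul_sub]
          have : t' = 1 - t := by linarith
          rw [this, sub_smul, one_smul]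
          abel
        have hnorm : dist x y0 = t * dist y1 y0 := by
          rw [dist_eq_norm, dist_eq_norm, hsub, norm_smul, Real.norm_eq_abs,
            abs_of_nonneg htn]
        have hd2 : dist y1 y0 ≤ 2 :=
          square_dist_le_two y1 y0 (hFsq hy1F) (hFsq (hSF hy0S))
        have hle : Metric.infDist x S ≤ dist x y0 := Metric.infDist_le_dist_of_mem hy0S
        rw [hnorm] at hle
        calc Metric.infDist x S ≤ t * dist y1 y0 := hle
          _ ≤ t * 2 := mul_le_mul_of_nonneg_left hd2 htn
          _ = 2 * t := mul_comm _ _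
  -- conclude
  have h1 : m * Metric.infDist x S / 2 ≤ m * (2 * t) / 2 := by
    apply div_le_div_of_nonneg_right _ (by norm_num)
    exact mul_le_mul_of_nonneg_left hdist (le_of_lt hm)
  calc m * Metric.infDist x S / 2 ≤ m * (2 * t) / 2 := h1
    _ = m * t := by ring
    _ ≤ g x := hgxt
end

section
/- Let π, π' : ℝ → ℝ be minimal valid functions for the Gomory–Johnson infinite group problem with parameter f, i.e., nonnegative, subadditive, periodic modulo 1, with π(0) = 0 and satisfying π(x) + π(f - x) = 1 for all x (and likewise for π'). If E(π) ⊆ E(π'), then P(π) ⊆ P(π'), where E(π) = {(x,y) : π(x)+π(y) = π(x+y)} and P(π) is the set of finite-support functions y : ℝ → ℤ₊ with ∑ r·y(r) ≡ f (mod 1) and ∑ π(r)·y(r) = 1. -/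
/-- Minimal valid function for the Gomory–Johnson infinite group problem with parameter `f`. -/
def MinimalValid (f : ℝ) (π : ℝ → ℝ) : Prop :=
  (∀ x, 0 ≤ π x) ∧ π 0 = 0 ∧ (∀ x y, π (x + y) ≤ π x + π y) ∧
  (∀ x, π (x + 1) = π x) ∧ (∀ x, π x + π (f - x) = 1)

/-- Additivity domain. -/
def Eset (π : ℝ → ℝ) : Set (ℝ × ℝ) := {p | π p.1 + π p.2 = π (p.1 + p.2)}

/-- `P(π)`: finite-support ℤ₊-valued functions with ∑ r·y(r) ≡ f (mod 1) and ∑ π(r)·y(r) = 1. -/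
def Pset (f : ℝ) (π : ℝ → ℝ) : Set (ℝ →₀ ℕ) :=
  {y | (∃ z : ℤ, (y.sum fun r n => r * (n : ℝ)) = f + z) ∧
       (y.sum fun r n => π r * (n : ℝ)) = 1}

/-- Valid function. -/
def ValidFn (f : ℝ) (π : ℝ → ℝ) : Prop :=
  (∀ x, 0 ≤ π x) ∧
  ∀ y : ℝ →₀ ℕ, (∃ z : ℤ, (y.sum fun r n => r * (n : ℝ)) = f + z) →
    1 ≤ (y.sum fun r n => π r * (n : ℝ))

lemma per_int {π : ℝ → ℝ} (hp : ∀ x, π (x + 1) = π x) (x : ℝ) (z : ℤ) :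
    π (x + z) = π x := by
  have h : Function.Periodic π 1 := hp
  simpa using (h.int_mul z) x

lemma multi_sub {π : ℝ → ℝ} (h0 : π 0 = 0) (hs : ∀ x y, π (x + y) ≤ π x + π y) :
    ∀ m : Multiset ℝ, π m.sum ≤ (m.map π).sum := by
  intro m
  induction m using Multiset.induction with
  | empty => simp [h0]
  | cons a s ih =>
    simp only [Multiset.sum_cons, Multiset.map_cons]
    calc π (a + s.sum) ≤ π a + π s.sum := hs a s.sum
    _ ≤ π a + (s.map π).sum := by linarith

lemma multi_eq {π π' : ℝ → ℝ} (h0 : π 0 = 0) (hs : ∀ x y, π (x + y) ≤ π x + π y)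
    (h0' : π' 0 = 0) (hE : Eset π ⊆ Eset π') :
    ∀ m : Multiset ℝ, π m.sum = (m.map π).sum → π' m.sum = (m.map π').sum := by
  intro m
  induction m using Multiset.induction with
  | empty => simp [h0, h0']
  | cons a s ih =>
    intro heq
    simp only [Multiset.sum_cons, Multiset.map_cons, Multiset.sum_cons] at heq ⊢
    have h1 : π (a + s.sum) ≤ π a + π s.sum := hs a s.sum
    have h2 : π s.sum ≤ (s.map π).sum := multi_sub h0 hs s
    have e1 : π a + π s.sum = π (a + s.sum) := by linarith
    have e2 : π s.sum = (s.map π).sum := by linarith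
    have hmem : (a, s.sum) ∈ Eset π := e1
    have hE2 : π' a + π' s.sum = π' (a + s.sum) := hE hmem
    rw [← hE2, ih e2]

lemma sum_toMultiset (g : ℝ → ℝ) (y : ℝ →₀ ℕ) :
    ((Finsupp.toMultiset y).map g).sum = y.sum fun r n => g r * (n : ℝ) := by
  induction y using Finsupp.induction with
  | zero => simp
  | single_add a n yf ha hn ih =>
    rw [Finsupp.toMultiset_add, Multiset.map_add, Multiset.sum_add, ih,
      Finsupp.sum_add_index (by intros; simp) (by intros; push_cast; ring),
      Finsupp.toMultiset_single, Finsupp.sum_single_index (by simp)]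
    simp [Multiset.nsmul_singleton, Multiset.sum_replicate, nsmul_eq_mul, mul_comm]

theorem E_subset_implies_P_subset (f : ℝ) (hf : ∀ z : ℤ, f ≠ z)
    (π π' : ℝ → ℝ) (hπ : MinimalValid f π) (hπ' : MinimalValid f π')
    (hE : Eset π ⊆ Eset π') :
    Pset f π ⊆ Pset f π' := by
  obtain ⟨hnn, h0, hsub, hper, hsym⟩ := hπ
  obtain ⟨hnn', h0', hsub', hper', hsym'⟩ := hπ'
  have hπf : π f = 1 := by have := hsym 0; simpa [h0] using this
  have hπ'f : π' f = 1 := by have := hsym' 0; simpa [h0'] using this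
  intro y hy
  obtain ⟨⟨z, hz⟩, h1⟩ := hy
  set m := Finsupp.toMultiset y with hm
  have hmsum : m.sum = f + z := by
    have h := sum_toMultiset (fun x => x) y
    rw [Multiset.map_id'] at h
    rw [hm, h]
    exact hz
  have hmapπ : (m.map π).sum = 1 := by rw [sum_toMultiset π y]; exact h1
  have hπS : π m.sum = 1 := by rw [hmsum, per_int hper f z, hπf]
  have heq : π m.sum = (m.map π).sum := by rw [hπS, hmapπ]
  have h' : π' m.sum = (m.map π').sum := multi_eq h0 hsub h0' hE m heq
  have hπ'S : π' m.sum = 1 := by rw [hmsum, per_int hper' f z, hπ'f]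
  refine ⟨⟨z, hz⟩, ?_⟩
  rw [← sum_toMultiset π' y, ← h', hπ'S]
end

section
/- Let π be a valid function (for the infinite group problem with parameter f) that is a weak facet. Then π is minimal valid. Formally: if π is valid and not minimal, then there exists a minimal valid function π' with P(π) ⊊ P(π'), contradicting the weak facet property. -/
private lemma subadd_nat (π : ℝ → ℝ) (h0 : π 0 = 0)
    (hsub : ∀ x y, π (x + y) ≤ π x + π y) (a : ℝ) :
    ∀ n : ℕ, π (a * n) ≤ π a * n := by
  intro n
  induction n with
  | zero => simp [h0]
  | succ k ih =>
    have : π (a * k + a) ≤ π (a * k) + π a := hsub _ _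
    push_cast
    calc π (a * (k + 1)) = π (a * k + a) := by ring_nf
    _ ≤ π (a * k) + π a := this
    _ ≤ π a * k + π a := by linarith
    _ = π a * (k + 1) := by ring

private lemma subadd_sum (π : ℝ → ℝ) (h0 : π 0 = 0)
    (hsub : ∀ x y, π (x + y) ≤ π x + π y) (y : ℝ →₀ ℕ) :
    π (y.sum fun r n => r * (n : ℝ)) ≤ y.sum fun r n => π r * (n : ℝ) := by
  induction y using Finsupp.induction with
  | zero => simp [h0]
  | single_add a b g ha hb ih =>
    rw [Finsupp.sum_add_index' (by simp) (by intro r m n; push_cast; ring),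
        Finsupp.sum_add_index' (by simp) (by intro r m n; push_cast; ring),
        Finsupp.sum_single_index (by simp), Finsupp.sum_single_index (by simp)]
    calc π (a * b + g.sum fun r n => r * (n : ℝ))
        ≤ π (a * b) + π (g.sum fun r n => r * (n : ℝ)) := hsub _ _
      _ ≤ π a * b + (g.sum fun r n => π r * (n : ℝ)) := by
          have := subadd_nat π h0 hsub a b; linarith

private lemma periodic_int (π : ℝ → ℝ) (hper : ∀ x, π (x + 1) = π x) :
    ∀ (z : ℤ) (x : ℝ), π (x + z) = π x := by
  intro z x
  have hp : Function.Periodic π 1 := hper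
  have := (hp.int_mul z) x
  simpa using this

private lemma minimal_valid (f : ℝ) (π : ℝ → ℝ) (h : MinimalValid f π) : ValidFn f π := by
  obtain ⟨hnn, h0, hsub, hper, hsym⟩ := h
  refine ⟨hnn, fun y ⟨z, hz⟩ => ?_⟩
  have hf1 : π f = 1 := by have := hsym f; simp [h0] at this; linarith
  have : π (y.sum fun r n => r * (n : ℝ)) = 1 := by
    rw [hz, periodic_int π hper z f, hf1]
  calc (1 : ℝ) = π (y.sum fun r n => r * (n : ℝ)) := this.symm
    _ ≤ _ := subadd_sum π h0 hsub y

theorem weak_facet_implies_minimal (f : ℝ) (hf : ∀ z : ℤ, f ≠ z)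
    (π : ℝ → ℝ) (hπ : ValidFn f π)
    (hdom : ¬ MinimalValid f π →
      ∃ π' : ℝ → ℝ, MinimalValid f π' ∧ (∀ x, π' x ≤ π x) ∧ ∃ x₀, π' x₀ < π x₀)
    (hwf : ∀ π' : ℝ → ℝ, ValidFn f π' → Pset f π ⊆ Pset f π' → Pset f π = Pset f π') :
    MinimalValid f π := by
  by_contra hnm
  obtain ⟨π', hmin, hle, x₀, hx₀⟩ := hdom hnm
  have hvalid' : ValidFn f π' := minimal_valid f π' hmin
  -- Pset π ⊆ Pset π'
  have hsubset : Pset f π ⊆ Pset f π' := by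
    intro y ⟨hz, hs⟩
    refine ⟨hz, le_antisymm ?_ (hvalid'.2 y hz)⟩
    rw [← hs]
    apply Finsupp.sum_le_sum
    intro r _
    exact mul_le_mul_of_nonneg_right (hle r) (by positivity)
  have heq := hwf π' hvalid' hsubset
  -- the witness y
  set y : ℝ →₀ ℕ := Finsupp.single x₀ 1 + Finsupp.single (f - x₀) 1 with hy
  have hsum : ∀ g : ℝ → ℝ, (y.sum fun r n => g r * (n : ℝ)) = g x₀ + g (f - x₀) := by
    intro g
    rw [hy, Finsupp.sum_add_index' (by simp) (by intro r m n; push_cast; ring),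
        Finsupp.sum_single_index (by simp), Finsupp.sum_single_index (by simp)]
    simp
  have hsumr : (y.sum fun r n => r * (n : ℝ)) = f + (0 : ℤ) := by
    have h := hsum id
    simp only [id] at h
    rw [h]; push_cast; ring
  have hy' : y ∈ Pset f π' := by
    refine ⟨⟨0, hsumr⟩, ?_⟩
    rw [hsum π']
    exact hmin.2.2.2.2 x₀
  rw [← heq] at hy'
  obtain ⟨-, hval⟩ := hy'
  rw [hsum π] at hval
  have h1 := hmin.2.2.2.2 x₀
  have h2 := hle (f - x₀)
  linarith
end

section
/- Let π be a minimal valid function. Suppose for every minimal valid function π', P(π) ⊆ P(π') implies P(π) = P(π'). Then π is a weak facet: for every valid (not necessarily minimal) function π*, P(π) ⊆ P(π*) implies P(π) = P(π*). (Hypothesis: every valid function π* is pointwise dominated by some minimal valid function π' ≤ π*, and then P(π*) ⊆ P(π').) -/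
theorem weak_facet_from_minimal_comparisons (f : ℝ) (hf : ∀ z : ℤ, f ≠ z)
    (π : ℝ → ℝ) (hπ : MinimalValid f π)
    (hmin : ∀ π' : ℝ → ℝ, MinimalValid f π' → Pset f π ⊆ Pset f π' → Pset f π = Pset f π')
    (hdom : ∀ πs : ℝ → ℝ, ValidFn f πs →
      ∃ π' : ℝ → ℝ, MinimalValid f π' ∧ ∀ x, π' x ≤ πs x) :
    ∀ πs : ℝ → ℝ, ValidFn f πs → Pset f π ⊆ Pset f πs → Pset f π = Pset f πs := by
  intro πs hvs hsub
  obtain ⟨π', hmin', hle⟩ := hdom πs hvs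
  obtain ⟨hpos', h0', hsubadd', hper', hsym'⟩ := hmin'
  -- π' is valid
  have hnsmul : ∀ (n : ℕ) (a : ℝ), π' (a * n) ≤ π' a * n := by
    intro n a
    induction n with
    | zero => simp [h0']
    | succ k ih =>
      push_cast
      calc π' (a * (k + 1)) = π' (a * k + a) := by ring_nf
        _ ≤ π' (a * k) + π' a := hsubadd' _ _
        _ ≤ π' a * k + π' a := by linarith
        _ = π' a * (k + 1) := by ring
  have hsumle : ∀ y : ℝ →₀ ℕ,
      π' (y.sum fun r n => r * (n : ℝ)) ≤ y.sum fun r n => π' r * (n : ℝ) := by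
    intro y
    induction y using Finsupp.induction with
    | zero => simp [h0']
    | single_add a n y ha hn ih =>
      rw [Finsupp.sum_add_index, Finsupp.sum_add_index]
      · rw [Finsupp.sum_single_index (by simp), Finsupp.sum_single_index (by simp)]
        calc π' (a * n + y.sum fun r n => r * (n : ℝ))
            ≤ π' (a * n) + π' (y.sum fun r n => r * (n : ℝ)) := hsubadd' _ _
          _ ≤ π' a * n + y.sum (fun r n => π' r * (n : ℝ)) := by
              have := hnsmul n a; linarith
      · intro r _; simp
      · intro r _ m k; push_cast; ring
      · intro r _; simp
      · intro r _ m k; push_cast; ring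
  have hperZ : ∀ (x : ℝ) (z : ℤ), π' (x + z) = π' x := by
    intro x z
    induction z using Int.induction_on with
    | zero => simp
    | succ k ih => push_cast; rw [show x + ((k : ℝ) + 1) = (x + k) + 1 by ring, hper']
                   push_cast at ih; exact ih
    | pred k ih =>
        push_cast
        have := hper' (x + (-(k : ℝ) - 1))
        rw [show x + (-(k : ℝ) - 1) + 1 = x + -(k : ℝ) by ring] at this
        push_cast at ih
        rw [← this, ih]
  have hf1 : π' f = 1 := by
    have := hsym' f
    simp [h0'] at this
    linarith
  have hvalid' : ∀ y : ℝ →₀ ℕ, (∃ z : ℤ, (y.sum fun r n => r * (n : ℝ)) = f + z) →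
      1 ≤ (y.sum fun r n => π' r * (n : ℝ)) := by
    rintro y ⟨z, hz⟩
    have := hsumle y
    rw [hz, hperZ f z, hf1] at this
    exact this
  -- P(πs) ⊆ P(π')
  have hsub2 : Pset f πs ⊆ Pset f π' := by
    rintro y ⟨hc, hs⟩
    refine ⟨hc, le_antisymm ?_ (hvalid' y hc)⟩
    calc (y.sum fun r n => π' r * (n : ℝ)) ≤ y.sum fun r n => πs r * (n : ℝ) :=
          Finset.sum_le_sum fun r _ =>
            mul_le_mul_of_nonneg_right (hle r) (Nat.cast_nonneg _)
      _ = 1 := hs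
  have heq : Pset f π = Pset f π' :=
    hmin π' ⟨hpos', h0', hsubadd', hper', hsym'⟩ (hsub.trans hsub2)
  exact le_antisymm hsub (hsub2.trans heq.symm.le)
end

section
/- A minimal valid function π is a facet if and only if there is no nonzero function π̄ : ℝ → ℝ with π̄(0) = 0, π̄(f) = 0, Δπ̄(x,y) = 0 for all (x,y) ∈ E(π), π̄ periodic modulo 1, such that π + π̄ is minimal valid. -/
/-- Finsupp sum as multiset sum. -/
lemma sumM (g : ℝ → ℝ) (m : Multiset ℝ) :
    ((Multiset.toFinsupp m).sum fun r n => g r * (n : ℝ)) = (m.map g).sum := by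
  induction m using Multiset.induction with
  | empty => simp
  | cons a m ih =>
    rw [show a ::ₘ m = {a} + m from (Multiset.singleton_add a m).symm,
      Multiset.toFinsupp_add, Multiset.toFinsupp_singleton,
      Finsupp.sum_add_index' (by intro r; simp) (by intro r n₁ n₂; push_cast; ring),
      Finsupp.sum_single_index (by simp), ih]
    simp [mul_comm]

lemma sumM' (g : ℝ → ℝ) (y : ℝ →₀ ℕ) :
    (y.sum fun r n => g r * (n : ℝ)) = ((Finsupp.toMultiset y).map g).sum := by
  classical
  rw [← sumM g (Finsupp.toMultiset y), Finsupp.toMultiset_toFinsupp]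

lemma sumMid (m : Multiset ℝ) :
    ((Multiset.toFinsupp m).sum fun r n => r * (n : ℝ)) = m.sum := by
  simpa using sumM id m

lemma sumMid' (y : ℝ →₀ ℕ) :
    (y.sum fun r n => r * (n : ℝ)) = (Finsupp.toMultiset y).sum := by
  simpa using sumM' id y

lemma periodic_int_s15 {g : ℝ → ℝ} (h : ∀ x, g (x + 1) = g x) (x : ℝ) (z : ℤ) :
    g (x + z) = g x := by
  have := (Function.Periodic.int_mul (c := (1 : ℝ)) h z) x
  simpa using this

/-- Subadditivity bound over a multiset. -/
lemma subadd_multiset (π : ℝ → ℝ) (hπ0 : π 0 = 0)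
    (hsub : ∀ x y, π (x + y) ≤ π x + π y) (m : Multiset ℝ) :
    π m.sum ≤ (m.map π).sum := by
  induction m using Multiset.induction with
  | empty => simp [hπ0]
  | cons a m ih =>
    simp only [Multiset.sum_cons, Multiset.map_cons]
    calc π (a + m.sum) ≤ π a + π m.sum := hsub a m.sum
    _ ≤ π a + (m.map π).sum := by linarith

/-- Tightness transfers to a perturbation additive on `E(π)`. -/
lemma pert_multiset (π πb : ℝ → ℝ) (hπ0 : π 0 = 0)
    (hsub : ∀ x y, π (x + y) ≤ π x + π y) (hb0 : πb 0 = 0)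
    (hbadd : ∀ x y, π x + π y = π (x + y) → πb x + πb y = πb (x + y))
    (m : Multiset ℝ) (htight : π m.sum = (m.map π).sum) :
    πb m.sum = (m.map πb).sum := by
  induction m using Multiset.induction with
  | empty => simp [hb0]
  | cons a m ih =>
    simp only [Multiset.sum_cons, Multiset.map_cons, Multiset.sum_cons] at *
    have h1 : π (a + m.sum) ≤ π a + π m.sum := hsub a m.sum
    have h2 : π m.sum ≤ (m.map π).sum := subadd_multiset π hπ0 hsub m
    have e1 : π m.sum = (m.map π).sum := by linarith
    have e2 : π a + π m.sum = π (a + m.sum) := by linarith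
    rw [← hbadd a m.sum e2, ih e1]

theorem facet_iff_no_perturbation (f : ℝ) (hf : ∀ z : ℤ, f ≠ z)
    (π : ℝ → ℝ) (hπ : MinimalValid f π) :
    (∀ π' : ℝ → ℝ, MinimalValid f π' → Pset f π ⊆ Pset f π' → π' = π) ↔
    ¬ ∃ πb : ℝ → ℝ, πb ≠ 0 ∧ πb 0 = 0 ∧ πb f = 0 ∧
        (∀ p ∈ Eset π, πb p.1 + πb p.2 = πb (p.1 + p.2)) ∧
        (∀ x, πb (x + 1) = πb x) ∧
        MinimalValid f (fun x => π x + πb x) := by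
  obtain ⟨hnn, h0, hsub, hper, hsym⟩ := hπ
  have hπf : π f = 1 := by
    have := hsym 0
    rw [h0, sub_zero] at this; linarith
  have πper : ∀ (x : ℝ) (z : ℤ), π (x + z) = π x := periodic_int_s15 hper
  constructor
  · -- facet → no perturbation
    rintro hfacet ⟨πb, hbne, hb0, hbf, hbE, hbper, hmin'⟩
    have πbper : ∀ (x : ℝ) (z : ℤ), πb (x + z) = πb x := periodic_int_s15 hbper
    have hsubset : Pset f π ⊆ Pset f (fun x => π x + πb x) := by
      rintro y ⟨⟨z, hz⟩, h1⟩
      refine ⟨⟨z, hz⟩, ?_⟩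
      set m := Finsupp.toMultiset y with hm
      have hms : m.sum = f + z := by
        rw [← hz, sumMid' y]
      have htight : π m.sum = (m.map π).sum := by
        rw [hms, πper f z, hπf, ← sumM' π y, h1]
      have hb : πb m.sum = (m.map πb).sum :=
        pert_multiset π πb h0 hsub hb0
          (fun x y' h => hbE (x, y') h) m htight
      have hbz : (m.map πb).sum = 0 := by
        rw [← hb, hms, πbper f z, hbf]
      rw [sumM' (fun x => π x + πb x) y]
      have : (m.map fun x => π x + πb x).sum = (m.map π).sum + (m.map πb).sum := by
        rw [← Multiset.sum_map_add]
      rw [this, hbz, ← sumM' π y, h1, add_zero]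
    have := hfacet _ hmin' hsubset
    apply hbne
    funext x
    show πb x = 0
    have := congrFun this x
    linarith
  · -- no perturbation → facet
    intro hno π' hmin' hsubset
    by_contra hne
    obtain ⟨hnn', h0', hsub', hper', hsym'⟩ := hmin'
    have hπ'f : π' f = 1 := by
      have := hsym' 0
      rw [h0', sub_zero] at this; linarith
    apply hno
    refine ⟨fun x => π' x - π x, ?_, by simp [h0, h0'], by simp [hπf, hπ'f], ?_, ?_, ?_⟩
    · intro h
      apply hne
      funext x
      have := congrFun h x
      simp only [Pi.zero_apply] at this
      linarith
    · rintro ⟨x, y⟩ hE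
      simp only [Eset, Set.mem_setOf_eq] at hE
      simp only
      -- build the element of Pset
      have hkey : π' x + π' y + π' (f - (x + y)) = 1 := by
        classical
        set m : Multiset ℝ := {x, y, f - (x + y)} with hm
        have hy0 : Multiset.toFinsupp m ∈ Pset f π := by
          constructor
          · refine ⟨0, ?_⟩
            rw [sumMid m]
            simp only [hm, Multiset.insert_eq_cons, Multiset.sum_cons,
              Multiset.sum_singleton]
            push_cast; ring
          · rw [sumM π m]
            simp only [hm, Multiset.insert_eq_cons, Multiset.map_cons,
              Multiset.map_singleton, Multiset.sum_cons, Multiset.sum_singleton]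
            have := hsym (x + y)
            linarith
        have hy1 := hsubset hy0
        obtain ⟨-, h1'⟩ := hy1
        rw [sumM π' m] at h1'
        simp only [hm, Multiset.insert_eq_cons, Multiset.map_cons,
          Multiset.map_singleton, Multiset.sum_cons, Multiset.sum_singleton] at h1'
        linarith
      have := hsym' (x + y)
      linarith
    · intro x
      simp only
      rw [hper, hper']
    · have : (fun x => π x + (π' x - π x)) = π' := by funext x; ring
      rw [this]
      exact ⟨hnn', h0', hsub', hper', hsym'⟩
end

section
/- Let π be a minimal valid function that is continuous and piecewise linear over a locally finite polyhedral complex of ℝ, and suppose π is extreme, i.e., π = (π¹+π²)/2 with π¹, π² minimal valid implies π¹ = π² = π. If π' is a minimal valid function with E(π) ⊆ E(π'), and π' is Lipschitz continuous, and the difference π̄ = π' − π satisfies the hypotheses of the perturbation theorem (Lipschitz, π̄(0)=π̄(f)=0, periodic, additive on E(π)), then there exists ε > 0 such that π ± ε·π̄ are minimal valid; hence π̄ = 0 and π' = π. -/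
/-- `π` is piecewise linear over a locally finite one-dimensional polyhedral complex:
there is a locally finite breakpoint set `B`, and `π` is affine on every open interval
avoiding `B`. -/
def PiecewiseLinearLocFin (π : ℝ → ℝ) : Prop :=
  ∃ B : Set ℝ, (∀ K : Set ℝ, IsCompact K → (B ∩ K).Finite) ∧
    ∀ a b : ℝ, a < b → (Set.Ioo a b ∩ B = ∅) →
      ∃ c d : ℝ, ∀ x ∈ Set.Ioo a b, π x = c * x + d

lemma periodic_int' {g : ℝ → ℝ} (hg : ∀ x, g (x + 1) = g x) : ∀ (n : ℤ) (x : ℝ), g (x + n) = g x := by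
  intro n
  induction n using Int.induction_on with
  | zero => simp
  | succ k ih =>
      intro x
      have h1 : x + ((k : ℤ) + 1 : ℤ) = (x + (k : ℤ)) + 1 := by push_cast; ring
      rw [h1, hg, ih]
  | pred k ih =>
      intro x
      have h1 : x + (-(k:ℤ) : ℤ) = (x + (-(k:ℤ) - 1 : ℤ)) + 1 := by push_cast; ring
      have h2 := hg (x + (-(k:ℤ) - 1 : ℤ))
      rw [← h1] at h2
      rw [← h2]
      exact ih x

lemma periodic_fract {g : ℝ → ℝ} (hg : ∀ x, g (x + 1) = g x) (x : ℝ) : g x = g (Int.fract x) := by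
  conv_lhs => rw [← Int.fract_add_floor x]
  exact periodic_int' hg ⌊x⌋ (Int.fract x)

lemma bounded_of_per_lip {g : ℝ → ℝ} {K : NNReal} (hL : LipschitzWith K g)
    (hper : ∀ x, g (x + 1) = g x) (h0 : g 0 = 0) (x : ℝ) : |g x| ≤ K := by
  rw [periodic_fract hper x]
  have h1 := hL.dist_le_mul (Int.fract x) 0
  rw [Real.dist_eq, Real.dist_eq, h0, sub_zero, sub_zero] at h1
  have h2 : |Int.fract x| ≤ 1 := by
    rw [abs_of_nonneg (Int.fract_nonneg x)]
    exact le_of_lt (Int.fract_lt_one x)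
  calc |g (Int.fract x)| ≤ K * |Int.fract x| := h1
    _ ≤ K * 1 := by nlinarith [K.coe_nonneg]
    _ = K := mul_one _

lemma nonneg_of_subadd {θ : ℝ → ℝ} (h0 : θ 0 = 0) (hsub : ∀ x y, θ (x + y) ≤ θ x + θ y)
    (M : ℝ) (hM : ∀ x, -M ≤ θ x) (x : ℝ) : 0 ≤ θ x := by
  by_contra h
  push_neg at h
  have hn : ∀ n : ℕ, θ (n * x) ≤ n * θ x := by
    intro n
    induction n with
    | zero => simp [h0]
    | succ k ih =>
        have h2 : ((k + 1 : ℕ) : ℝ) * x = (k : ℝ) * x + x := by push_cast; ring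
        rw [h2]
        calc θ ((k:ℝ) * x + x) ≤ θ ((k:ℝ)*x) + θ x := hsub _ _
          _ ≤ (k:ℝ) * θ x + θ x := by linarith
          _ = ((k+1:ℕ):ℝ) * θ x := by push_cast; ring
  obtain ⟨n, hn'⟩ := exists_nat_gt (M / (-θ x))
  have hx : (0:ℝ) < -θ x := by linarith
  have h3 : M < n * (-θ x) := by
    rw [div_lt_iff₀ hx] at hn'
    linarith
  have h4 := hn n
  have h5 := hM ((n:ℝ) * x)
  nlinarith

lemma ray_decomp (u w : ℝ) (hu : 0 ≤ u) (hw : 0 ≤ w) :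
    ∃ c > 0, ∀ x y : ℝ, 0 ≤ x → 0 ≤ y → ∃ x' y' : ℝ,
      0 ≤ x' ∧ x' ≤ x ∧ 0 ≤ y' ∧ y' ≤ y ∧ x' * u + y' * w = 0 ∧
      c * max (x - x') (y - y') ≤ x * u + y * w := by
  rcases eq_or_lt_of_le hu with hu0 | hu0 <;> rcases eq_or_lt_of_le hw with hw0 | hw0
  · refine ⟨1, one_pos, fun x y hx hy => ⟨x, y, hx, le_refl _, hy, le_refl _, ?_, ?_⟩⟩
    · rw [← hu0, ← hw0]; ring
    · simp [← hu0, ← hw0]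
  · refine ⟨w, hw0, fun x y hx hy => ⟨x, 0, hx, le_refl _, le_refl _, hy, ?_, ?_⟩⟩
    · rw [← hu0]; ring
    · rw [← hu0]
      have h1 : max (x - x) (y - 0) = y := by
        rw [sub_self, sub_zero]
        exact max_eq_right hy
      rw [h1]; ring_nf; nlinarith
  · refine ⟨u, hu0, fun x y hx hy => ⟨0, y, le_refl _, hx, hy, le_refl _, ?_, ?_⟩⟩
    · rw [← hw0]; ring
    · rw [← hw0]
      have h1 : max (x - 0) (y - y) = x := by
        rw [sub_self, sub_zero]
        exact max_eq_left hx
      rw [h1]; ring_nf; nlinarith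
  · refine ⟨min u w, lt_min hu0 hw0, fun x y hx hy =>
      ⟨0, 0, le_refl _, hx, le_refl _, hy, by ring, ?_⟩⟩
    have h1 : max (x - 0) (y - 0) ≤ x + y := by
      rw [sub_zero, sub_zero]
      exact max_le (by linarith) (by linarith)
    have h2 : min u w * max (x - 0) (y - 0) ≤ min u w * (x + y) :=
      mul_le_mul_of_nonneg_left h1 (le_of_lt (lt_min hu0 hw0))
    calc min u w * max (x - 0) (y - 0) ≤ min u w * (x + y) := h2
      _ = min u w * x + min u w * y := by ring
      _ ≤ x * u + y * w := by
          have h3 := min_le_left u w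
          have h4 := min_le_right u w
          nlinarith

lemma local_affine {π : ℝ → ℝ} (hcont : Continuous π) (hpwl : PiecewiseLinearLocFin π) (x₀ : ℝ) :
    ∃ r > 0, ∃ sp sm : ℝ, (∀ t, 0 ≤ t → t ≤ r → π (x₀ + t) = π x₀ + sp * t) ∧
      (∀ t, -r ≤ t → t ≤ 0 → π (x₀ + t) = π x₀ + sm * t) := by
  obtain ⟨B, hfin, haff⟩ := hpwl
  set T : Set ℝ := (B ∩ Set.Icc (x₀ - 1) (x₀ + 1)) \ {x₀} with hT
  have hTfin : T.Finite := ((hfin _ isCompact_Icc).diff)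
  have hTc : IsClosed T := hTfin.isClosed
  have hx₀ : x₀ ∈ Tᶜ := by simp [hT]
  obtain ⟨ε, hε, hball⟩ := Metric.isOpen_iff.mp hTc.isOpen_compl x₀ hx₀
  set r : ℝ := min (ε / 2) (1 / 2) with hr
  have hr0 : 0 < r := lt_min (by linarith) (by norm_num)
  have hr1 : r ≤ 1 / 2 := min_le_right _ _
  have hrε : r < ε := lt_of_le_of_lt (min_le_left _ _) (by linarith)
  have hkey : ∀ b ∈ B, x₀ - r ≤ b → b ≤ x₀ + r → b ≠ x₀ → False := by
    intro b hb h1 h2 hne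
    have hbT : b ∈ T := by
      refine ⟨⟨hb, ⟨by linarith, by linarith⟩⟩, hne⟩
    have : b ∈ Metric.ball x₀ ε := by
      rw [Metric.mem_ball, Real.dist_eq]
      have h3 : |b - x₀| ≤ r := abs_le.mpr ⟨by linarith, by linarith⟩
      linarith
    exact (hball this) hbT
  have hem1 : Set.Ioo x₀ (x₀ + r) ∩ B = ∅ := by
    ext b
    simp only [Set.mem_inter_iff, Set.mem_Ioo, Set.mem_empty_iff_false, iff_false, not_and]
    intro hb hbB
    exact hkey b hbB (by linarith [hb.1]) (by linarith [hb.2]) (by linarith [hb.1])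
  have hem2 : Set.Ioo (x₀ - r) x₀ ∩ B = ∅ := by
    ext b
    simp only [Set.mem_inter_iff, Set.mem_Ioo, Set.mem_empty_iff_false, iff_false, not_and]
    intro hb hbB
    exact hkey b hbB (by linarith [hb.1]) (by linarith [hb.2]) (by linarith [hb.2])
  obtain ⟨c1, d1, h1⟩ := haff x₀ (x₀ + r) (by linarith) hem1
  obtain ⟨c2, d2, h2⟩ := haff (x₀ - r) x₀ (by linarith) hem2
  have hcl1 : Set.EqOn π (fun x => c1 * x + d1) (Set.Icc x₀ (x₀ + r)) := by
    have := (Set.EqOn.closure (fun x hx => h1 x hx) hcont ((continuous_const.mul continuous_id).add continuous_const))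
    rwa [closure_Ioo (by linarith : x₀ ≠ x₀ + r)] at this
  have hcl2 : Set.EqOn π (fun x => c2 * x + d2) (Set.Icc (x₀ - r) x₀) := by
    have := (Set.EqOn.closure (fun x hx => h2 x hx) hcont ((continuous_const.mul continuous_id).add continuous_const))
    rwa [closure_Ioo (by linarith : x₀ - r ≠ x₀)] at this
  refine ⟨r, hr0, c1, c2, ?_, ?_⟩
  · intro t ht0 htr
    have ha := hcl1 (Set.mem_Icc.mpr ⟨by linarith, by linarith⟩ : x₀ + t ∈ Set.Icc x₀ (x₀ + r))
    have hb := hcl1 (Set.mem_Icc.mpr ⟨le_refl _, by linarith⟩ : x₀ ∈ Set.Icc x₀ (x₀ + r))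
    simp only at ha hb
    rw [ha, hb]; ring
  · intro t ht0 htr
    have ha := hcl2 (Set.mem_Icc.mpr ⟨by linarith, by linarith⟩ : x₀ + t ∈ Set.Icc (x₀ - r) x₀)
    have hb := hcl2 (Set.mem_Icc.mpr ⟨by linarith, le_refl _⟩ : x₀ ∈ Set.Icc (x₀ - r) x₀)
    simp only at ha hb
    rw [ha, hb]; ring

lemma local_bound_add {π : ℝ → ℝ} (hsub : ∀ x y, π (x + y) ≤ π x + π y)
    (hcont : Continuous π) (hpwl : PiecewiseLinearLocFin π) (x₀ y₀ : ℝ)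
    (hadd : π x₀ + π y₀ = π (x₀ + y₀)) :
    ∃ r > 0, ∃ c > 0, ∀ s t : ℝ, |s| ≤ r → |t| ≤ r → ∃ w₁ w₂ : ℝ,
      π (x₀ + w₁) + π (y₀ + w₂) = π ((x₀ + w₁) + (y₀ + w₂)) ∧
      c * max |s - w₁| |t - w₂| ≤ π (x₀ + s) + π (y₀ + t) - π ((x₀ + s) + (y₀ + t)) := by
  obtain ⟨r₁, hr₁, a, a', hA, hA'⟩ := local_affine hcont hpwl x₀
  obtain ⟨r₂, hr₂, b, b', hB, hB'⟩ := local_affine hcont hpwl y₀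
  obtain ⟨r₃, hr₃, e, e', hC, hC'⟩ := local_affine hcont hpwl (x₀ + y₀)
  set r : ℝ := min (min r₁ r₂) (r₃ / 2) with hrdef
  have hr0 : 0 < r := lt_min (lt_min hr₁ hr₂) (by linarith)
  have hrr₁ : r ≤ r₁ := le_trans (min_le_left _ _) (min_le_left _ _)
  have hrr₂ : r ≤ r₂ := le_trans (min_le_left _ _) (min_le_right _ _)
  have hrr₃ : 2 * r ≤ r₃ := by have := min_le_right (min r₁ r₂) (r₃ / 2); linarith
  set h : ℝ → ℝ → ℝ := fun s t =>
    (if 0 ≤ s then a * s else a' * s) + (if 0 ≤ t then b * t else b' * t) -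
      (if 0 ≤ s + t then e * (s + t) else e' * (s + t)) with hh
  -- model
  have pw_pos : ∀ (v v' q : ℝ), 0 ≤ q → (if 0 ≤ q then v * q else v' * q) = v * q :=
    fun v v' q hq => if_pos hq
  have pw_neg : ∀ (v v' q : ℝ), q ≤ 0 → (if 0 ≤ q then v * q else v' * q) = v' * q := by
    intro v v' q hq
    rcases eq_or_lt_of_le hq with hq' | hq'
    · simp [hq']
    · rw [if_neg (not_le.mpr hq')]
  have hπx : ∀ s : ℝ, |s| ≤ r → π (x₀ + s) = π x₀ + (if 0 ≤ s then a * s else a' * s) := by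
    intro s hs
    rcases le_total 0 s with h1 | h1
    · rw [pw_pos _ _ _ h1]; exact hA s h1 (by rw [abs_of_nonneg h1] at hs; linarith)
    · rw [pw_neg _ _ _ h1]
      exact hA' s (by rw [abs_of_nonpos h1] at hs; linarith) h1
  have hπy : ∀ t : ℝ, |t| ≤ r → π (y₀ + t) = π y₀ + (if 0 ≤ t then b * t else b' * t) := by
    intro t ht
    rcases le_total 0 t with h1 | h1
    · rw [pw_pos _ _ _ h1]; exact hB t h1 (by rw [abs_of_nonneg h1] at ht; linarith)
    · rw [pw_neg _ _ _ h1]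
      exact hB' t (by rw [abs_of_nonpos h1] at ht; linarith) h1
  have hπz : ∀ q : ℝ, |q| ≤ 2 * r →
      π ((x₀ + y₀) + q) = π (x₀ + y₀) + (if 0 ≤ q then e * q else e' * q) := by
    intro q hq
    rcases le_total 0 q with h1 | h1
    · rw [pw_pos _ _ _ h1]; exact hC q h1 (by rw [abs_of_nonneg h1] at hq; linarith)
    · rw [pw_neg _ _ _ h1]
      exact hC' q (by rw [abs_of_nonpos h1] at hq; linarith) h1
  have model : ∀ s t : ℝ, |s| ≤ r → |t| ≤ r →
      π (x₀ + s) + π (y₀ + t) - π ((x₀ + s) + (y₀ + t)) = h s t := by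
    intro s t hs ht
    have h1 := hπx s hs
    have h2 := hπy t ht
    have h3 : π ((x₀ + s) + (y₀ + t)) = π (x₀ + y₀) +
        (if 0 ≤ s + t then e * (s + t) else e' * (s + t)) := by
      have harg : (x₀ + s) + (y₀ + t) = (x₀ + y₀) + (s + t) := by ring
      rw [harg]
      exact hπz (s + t) (le_trans (abs_add_le s t) (by linarith [abs_le.mp hs, abs_le.mp ht]))
    rw [h1, h2, h3, hh]
    ring_nf
    linarith [hadd]
  -- nonnegativity on the ball, and homogeneity at scale r
  have hnnball : ∀ s t : ℝ, |s| ≤ r → |t| ≤ r → 0 ≤ h s t := by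
    intro s t hs ht
    rw [← model s t hs ht]
    have := hsub (x₀ + s) (y₀ + t)
    linarith
  have hom : ∀ s t : ℝ, h (r * s) (r * t) = r * h s t := by
    intro s t
    have key : ∀ (v v' q : ℝ), (if 0 ≤ r * q then v * (r * q) else v' * (r * q)) =
        r * (if 0 ≤ q then v * q else v' * q) := by
      intro v v' q
      rcases le_total 0 q with h1 | h1
      · rw [if_pos (mul_nonneg hr0.le h1), if_pos h1]; ring
      · rcases eq_or_lt_of_le h1 with h2 | h2
        · subst h2; simp
        · rw [if_neg (not_le.mpr (mul_neg_of_pos_of_neg hr0 h2)), if_neg (not_le.mpr h2)]; ring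
    have harg : r * s + r * t = r * (s + t) := by ring
    rw [hh]
    simp only
    rw [harg, key a a' s, key b b' t, key e e' (s + t)]
    ring
  have hgen : ∀ s t : ℝ, |s| ≤ 1 → |t| ≤ 1 → 0 ≤ h s t := by
    intro s t hs ht
    have h1 : |r * s| ≤ r := by
      rw [abs_mul, abs_of_pos hr0]; nlinarith [abs_nonneg s]
    have h2 : |r * t| ≤ r := by
      rw [abs_mul, abs_of_pos hr0]; nlinarith [abs_nonneg t]
    have := hnnball (r * s) (r * t) h1 h2
    rw [hom s t] at this
    nlinarith
  have hu₁ : 0 ≤ h 1 0 := hgen 1 0 (by norm_num) (by norm_num)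
  have hu₂ : 0 ≤ h 0 1 := hgen 0 1 (by norm_num) (by norm_num)
  have hu₃ : 0 ≤ h (-1) 0 := hgen (-1) 0 (by norm_num) (by norm_num)
  have hu₄ : 0 ≤ h 0 (-1) := hgen 0 (-1) (by norm_num) (by norm_num)
  have hu₅ : 0 ≤ h 1 (-1) := hgen 1 (-1) (by norm_num) (by norm_num)
  have hu₆ : 0 ≤ h (-1) 1 := hgen (-1) 1 (by norm_num) (by norm_num)
  -- sector linearity
  have L₁ : ∀ s t : ℝ, 0 ≤ s → 0 ≤ t → h s t = s * h 1 0 + t * h 0 1 := by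
    intro s t hs ht
    rw [hh]; simp only
    rw [pw_pos _ _ _ hs, pw_pos _ _ _ ht, pw_pos _ _ _ (by linarith : (0:ℝ) ≤ s + t)]
    norm_num; ring
  have L₂ : ∀ s t : ℝ, s ≤ 0 → t ≤ 0 → h s t = (-s) * h (-1) 0 + (-t) * h 0 (-1) := by
    intro s t hs ht
    rw [hh]; simp only
    rw [pw_neg _ _ _ hs, pw_neg _ _ _ ht, pw_neg _ _ _ (by linarith : s + t ≤ 0)]
    norm_num; ring
  have L₃ : ∀ s t : ℝ, 0 ≤ s → t ≤ 0 → 0 ≤ s + t →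
      h s t = (s + t) * h 1 0 + (-t) * h 1 (-1) := by
    intro s t hs ht hst
    rw [hh]; simp only
    rw [pw_pos _ _ _ hs, pw_neg _ _ _ ht, pw_pos _ _ _ hst]
    norm_num; ring
  have L₄ : ∀ s t : ℝ, 0 ≤ s → t ≤ 0 → s + t ≤ 0 →
      h s t = s * h 1 (-1) + (-(s + t)) * h 0 (-1) := by
    intro s t hs ht hst
    rw [hh]; simp only
    rw [pw_pos _ _ _ hs, pw_neg _ _ _ ht, pw_neg _ _ _ hst]
    norm_num; ring
  have L₅ : ∀ s t : ℝ, s ≤ 0 → 0 ≤ t → s + t ≤ 0 →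
      h s t = (-(s + t)) * h (-1) 0 + t * h (-1) 1 := by
    intro s t hs ht hst
    rw [hh]; simp only
    rw [pw_neg _ _ _ hs, pw_pos _ _ _ ht, pw_neg _ _ _ hst]
    norm_num; ring
  have L₆ : ∀ s t : ℝ, s ≤ 0 → 0 ≤ t → 0 ≤ s + t →
      h s t = (s + t) * h 0 1 + (-s) * h (-1) 1 := by
    intro s t hs ht hst
    rw [hh]; simp only
    rw [pw_neg _ _ _ hs, pw_pos _ _ _ ht, pw_pos _ _ _ hst]
    norm_num; ring
  obtain ⟨c₁, hc₁, H₁⟩ := ray_decomp (h 1 0) (h 0 1) hu₁ hu₂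
  obtain ⟨c₂, hc₂, H₂⟩ := ray_decomp (h (-1) 0) (h 0 (-1)) hu₃ hu₄
  obtain ⟨c₃, hc₃, H₃⟩ := ray_decomp (h 1 0) (h 1 (-1)) hu₁ hu₅
  obtain ⟨c₄, hc₄, H₄⟩ := ray_decomp (h 1 (-1)) (h 0 (-1)) hu₅ hu₄
  obtain ⟨c₅, hc₅, H₅⟩ := ray_decomp (h (-1) 0) (h (-1) 1) hu₃ hu₆
  obtain ⟨c₆, hc₆, H₆⟩ := ray_decomp (h 0 1) (h (-1) 1) hu₂ hu₆
  set c₀ : ℝ := min (min (min c₁ c₂) (min c₃ c₄)) (min c₅ c₆) with hc₀def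
  have hc₀ : 0 < c₀ := by
    apply lt_min (lt_min (lt_min hc₁ hc₂) (lt_min hc₃ hc₄)) (lt_min hc₅ hc₆)
  have k₁ : c₀ ≤ c₁ := le_trans (min_le_left _ _) (le_trans (min_le_left _ _) (min_le_left _ _))
  have k₂ : c₀ ≤ c₂ := le_trans (min_le_left _ _) (le_trans (min_le_left _ _) (min_le_right _ _))
  have k₃ : c₀ ≤ c₃ := le_trans (min_le_left _ _) (le_trans (min_le_right _ _) (min_le_left _ _))
  have k₄ : c₀ ≤ c₄ := le_trans (min_le_left _ _) (le_trans (min_le_right _ _) (min_le_right _ _))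
  have k₅ : c₀ ≤ c₅ := le_trans (min_le_right _ _) (min_le_left _ _)
  have k₆ : c₀ ≤ c₆ := le_trans (min_le_right _ _) (min_le_right _ _)
  refine ⟨r, hr0, c₀ / 2, by linarith, ?_⟩
  intro s t hs ht
  have hsr := abs_le.mp hs
  have htr := abs_le.mp ht
  rcases le_total 0 s with hss | hss <;> rcases le_total 0 t with hts | hts
  · -- sector 1 : s ≥ 0, t ≥ 0
    obtain ⟨x', y', hx'0, hx'x, hy'0, hy'y, hz, hineq⟩ := H₁ s t hss hts
    refine ⟨x', y', ?_, ?_⟩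
    · have hm := model x' y' (abs_le.mpr ⟨by linarith, by linarith⟩)
        (abs_le.mpr ⟨by linarith, by linarith⟩)
      have hl := L₁ x' y' hx'0 hy'0
      linarith
    · have hm := model s t hs ht
      rw [hm, L₁ s t hss hts]
      have hM1 : s - x' ≤ max (s - x') (t - y') := le_max_left _ _
      have hM2 : t - y' ≤ max (s - x') (t - y') := le_max_right _ _
      have hM0 : 0 ≤ max (s - x') (t - y') := le_trans (by linarith) hM1
      have habs : max |s - x'| |t - y'| ≤ 2 * max (s - x') (t - y') := by
        apply max_le
        · rw [abs_of_nonneg (by linarith)]; linarith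
        · rw [abs_of_nonneg (by linarith)]; linarith
      calc c₀ / 2 * max |s - x'| |t - y'| ≤ c₀ / 2 * (2 * max (s - x') (t - y')) := by
            apply mul_le_mul_of_nonneg_left habs (by linarith)
        _ = c₀ * max (s - x') (t - y') := by ring
        _ ≤ c₁ * max (s - x') (t - y') := mul_le_mul_of_nonneg_right k₁ hM0
        _ ≤ s * h 1 0 + t * h 0 1 := hineq
  · -- s ≥ 0, t ≤ 0 : split on s + t
    rcases le_total 0 (s + t) with hst | hst
    · -- sector 3
      obtain ⟨x', y', hx'0, hx'x, hy'0, hy'y, hz, hineq⟩ := H₃ (s + t) (-t) hst (by linarith)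
      refine ⟨x' + y', -y', ?_, ?_⟩
      · have hm := model (x' + y') (-y') (abs_le.mpr ⟨by linarith, by linarith⟩)
          (abs_le.mpr ⟨by linarith, by linarith⟩)
        have hl := L₃ (x' + y') (-y') (by linarith) (by linarith) (by linarith)
        have harg : x' + y' + -y' = x' := by ring
        rw [harg] at hl
        linarith
      · have hm := model s t hs ht
        rw [hm, L₃ s t hss hts hst]
        have hM1 : (s + t) - x' ≤ max ((s + t) - x') ((-t) - y') := le_max_left _ _
        have hM2 : (-t) - y' ≤ max ((s + t) - x') ((-t) - y') := le_max_right _ _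
        have hM0 : 0 ≤ max ((s + t) - x') ((-t) - y') := le_trans (by linarith) hM1
        have habs : max |s - (x' + y')| |t - -y'| ≤ 2 * max ((s + t) - x') ((-t) - y') := by
          apply max_le
          · rw [abs_of_nonneg (by linarith)]; linarith
          · rw [abs_of_nonpos (by linarith)]; linarith
        calc c₀ / 2 * max |s - (x' + y')| |t - -y'|
            ≤ c₀ / 2 * (2 * max ((s + t) - x') ((-t) - y')) := by
              apply mul_le_mul_of_nonneg_left habs (by linarith)
          _ = c₀ * max ((s + t) - x') ((-t) - y') := by ring
          _ ≤ c₃ * max ((s + t) - x') ((-t) - y') := mul_le_mul_of_nonneg_right k₃ hM0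
          _ ≤ (s + t) * h 1 0 + (-t) * h 1 (-1) := hineq
    · -- sector 4
      obtain ⟨x', y', hx'0, hx'x, hy'0, hy'y, hz, hineq⟩ := H₄ s (-(s + t)) hss (by linarith)
      refine ⟨x', -(x' + y'), ?_, ?_⟩
      · have hm := model x' (-(x' + y')) (abs_le.mpr ⟨by linarith, by linarith⟩)
          (abs_le.mpr ⟨by linarith, by linarith⟩)
        have hl := L₄ x' (-(x' + y')) hx'0 (by linarith) (by linarith)
        have harg : -(x' + -(x' + y')) = y' := by ring
        rw [harg] at hl
        linarith
      · have hm := model s t hs ht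
        rw [hm, L₄ s t hss hts hst]
        have hM1 : s - x' ≤ max (s - x') ((-(s + t)) - y') := le_max_left _ _
        have hM2 : (-(s + t)) - y' ≤ max (s - x') ((-(s + t)) - y') := le_max_right _ _
        have hM0 : 0 ≤ max (s - x') ((-(s + t)) - y') := le_trans (by linarith) hM1
        have habs : max |s - x'| |t - -(x' + y')| ≤ 2 * max (s - x') ((-(s + t)) - y') := by
          apply max_le
          · rw [abs_of_nonneg (by linarith)]; linarith
          · rw [abs_of_nonpos (by linarith)]; linarith
        calc c₀ / 2 * max |s - x'| |t - -(x' + y')|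
            ≤ c₀ / 2 * (2 * max (s - x') ((-(s + t)) - y')) := by
              apply mul_le_mul_of_nonneg_left habs (by linarith)
          _ = c₀ * max (s - x') ((-(s + t)) - y') := by ring
          _ ≤ c₄ * max (s - x') ((-(s + t)) - y') := mul_le_mul_of_nonneg_right k₄ hM0
          _ ≤ s * h 1 (-1) + (-(s + t)) * h 0 (-1) := hineq
  · -- s ≤ 0, t ≥ 0 : split on s + t
    rcases le_total 0 (s + t) with hst | hst
    · -- sector 6
      obtain ⟨x', y', hx'0, hx'x, hy'0, hy'y, hz, hineq⟩ := H₆ (s + t) (-s) hst (by linarith)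
      refine ⟨-y', x' + y', ?_, ?_⟩
      · have hm := model (-y') (x' + y') (abs_le.mpr ⟨by linarith, by linarith⟩)
          (abs_le.mpr ⟨by linarith, by linarith⟩)
        have hl := L₆ (-y') (x' + y') (by linarith) (by linarith) (by linarith)
        have harg : -y' + (x' + y') = x' := by ring
        rw [harg] at hl
        have harg2 : - -y' = y' := by ring
        rw [harg2] at hl
        linarith
      · have hm := model s t hs ht
        rw [hm, L₆ s t hss hts hst]
        have hM1 : (s + t) - x' ≤ max ((s + t) - x') ((-s) - y') := le_max_left _ _
        have hM2 : (-s) - y' ≤ max ((s + t) - x') ((-s) - y') := le_max_right _ _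
        have hM0 : 0 ≤ max ((s + t) - x') ((-s) - y') := le_trans (by linarith) hM1
        have habs : max |s - -y'| |t - (x' + y')| ≤ 2 * max ((s + t) - x') ((-s) - y') := by
          apply max_le
          · rw [abs_of_nonpos (by linarith)]; linarith
          · rw [abs_of_nonneg (by linarith)]; linarith
        calc c₀ / 2 * max |s - -y'| |t - (x' + y')|
            ≤ c₀ / 2 * (2 * max ((s + t) - x') ((-s) - y')) := by
              apply mul_le_mul_of_nonneg_left habs (by linarith)
          _ = c₀ * max ((s + t) - x') ((-s) - y') := by ring
          _ ≤ c₆ * max ((s + t) - x') ((-s) - y') := mul_le_mul_of_nonneg_right k₆ hM0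
          _ ≤ (s + t) * h 0 1 + (-s) * h (-1) 1 := hineq
    · -- sector 5
      obtain ⟨x', y', hx'0, hx'x, hy'0, hy'y, hz, hineq⟩ := H₅ (-(s + t)) t (by linarith) hts
      refine ⟨-(x' + y'), y', ?_, ?_⟩
      · have hm := model (-(x' + y')) y' (abs_le.mpr ⟨by linarith, by linarith⟩)
          (abs_le.mpr ⟨by linarith, by linarith⟩)
        have hl := L₅ (-(x' + y')) y' (by linarith) hy'0 (by linarith)
        have harg : -(-(x' + y') + y') = x' := by ring
        rw [harg] at hl
        linarith
      · have hm := model s t hs ht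
        rw [hm, L₅ s t hss hts hst]
        have hM1 : (-(s + t)) - x' ≤ max ((-(s + t)) - x') (t - y') := le_max_left _ _
        have hM2 : t - y' ≤ max ((-(s + t)) - x') (t - y') := le_max_right _ _
        have hM0 : 0 ≤ max ((-(s + t)) - x') (t - y') := le_trans (by linarith) hM2
        have habs : max |s - -(x' + y')| |t - y'| ≤ 2 * max ((-(s + t)) - x') (t - y') := by
          apply max_le
          · rw [abs_of_nonpos (by linarith)]; linarith
          · rw [abs_of_nonneg (by linarith)]; linarith
        calc c₀ / 2 * max |s - -(x' + y')| |t - y'|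
            ≤ c₀ / 2 * (2 * max ((-(s + t)) - x') (t - y')) := by
              apply mul_le_mul_of_nonneg_left habs (by linarith)
          _ = c₀ * max ((-(s + t)) - x') (t - y') := by ring
          _ ≤ c₅ * max ((-(s + t)) - x') (t - y') := mul_le_mul_of_nonneg_right k₅ hM0
          _ ≤ (-(s + t)) * h (-1) 0 + t * h (-1) 1 := hineq
  · -- sector 2 : s ≤ 0, t ≤ 0
    obtain ⟨x', y', hx'0, hx'x, hy'0, hy'y, hz, hineq⟩ := H₂ (-s) (-t) (by linarith) (by linarith)
    refine ⟨-x', -y', ?_, ?_⟩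
    · have hm := model (-x') (-y') (abs_le.mpr ⟨by linarith, by linarith⟩)
        (abs_le.mpr ⟨by linarith, by linarith⟩)
      have hl := L₂ (-x') (-y') (by linarith) (by linarith)
      have harg : - -x' = x' := by ring
      have harg2 : - -y' = y' := by ring
      rw [harg, harg2] at hl
      linarith
    · have hm := model s t hs ht
      rw [hm, L₂ s t hss hts]
      have hM1 : (-s) - x' ≤ max ((-s) - x') ((-t) - y') := le_max_left _ _
      have hM2 : (-t) - y' ≤ max ((-s) - x') ((-t) - y') := le_max_right _ _
      have hM0 : 0 ≤ max ((-s) - x') ((-t) - y') := le_trans (by linarith) hM1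
      have habs : max |s - -x'| |t - -y'| ≤ 2 * max ((-s) - x') ((-t) - y') := by
        apply max_le
        · rw [abs_of_nonpos (by linarith)]; linarith
        · rw [abs_of_nonpos (by linarith)]; linarith
      calc c₀ / 2 * max |s - -x'| |t - -y'|
          ≤ c₀ / 2 * (2 * max ((-s) - x') ((-t) - y')) := by
            apply mul_le_mul_of_nonneg_left habs (by linarith)
        _ = c₀ * max ((-s) - x') ((-t) - y') := by ring
        _ ≤ c₂ * max ((-s) - x') ((-t) - y') := mul_le_mul_of_nonneg_right k₂ hM0
        _ ≤ (-s) * h (-1) 0 + (-t) * h 0 (-1) := hineq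

lemma point_bound {π : ℝ → ℝ} (h0 : π 0 = 0) (hsub : ∀ x y, π (x + y) ≤ π x + π y)
    (hcont : Continuous π) (hpwl : PiecewiseLinearLocFin π) (p : ℝ × ℝ) :
    ∃ r > 0, ∃ c > 0, ∀ q : ℝ × ℝ, dist q p ≤ r →
      ∃ e ∈ Eset π, c * dist q e ≤ π q.1 + π q.2 - π (q.1 + q.2) := by
  rcases eq_or_lt_of_le (by linarith [hsub p.1 p.2] : 0 ≤ π p.1 + π p.2 - π (p.1 + p.2)) with hΔ | hΔ
  · -- additive point
    obtain ⟨r, hr, c, hc, H⟩ := local_bound_add hsub hcont hpwl p.1 p.2 (by linarith)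
    refine ⟨r, hr, c, hc, ?_⟩
    intro q hq
    rw [Prod.dist_eq, Real.dist_eq, Real.dist_eq] at hq
    obtain ⟨hq1, hq2⟩ := max_le_iff.mp hq
    obtain ⟨w₁, w₂, he, hineq⟩ := H (q.1 - p.1) (q.2 - p.2) hq1 hq2
    refine ⟨(p.1 + w₁, p.2 + w₂), he, ?_⟩
    rw [Prod.dist_eq, Real.dist_eq, Real.dist_eq]
    have h1 : p.1 + (q.1 - p.1) = q.1 := by ring
    have h2 : p.2 + (q.2 - p.2) = q.2 := by ring
    rw [h1, h2] at hineq
    have h3 : q.1 - (p.1 + w₁) = q.1 - p.1 - w₁ := by ring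
    have h4 : q.2 - (p.2 + w₂) = q.2 - p.2 - w₂ := by ring
    rw [h3, h4]
    exact hineq
  · -- positive point
    set F : ℝ × ℝ → ℝ := fun q => π q.1 + π q.2 - π (q.1 + q.2) with hF
    have hFc : Continuous F := by
      apply Continuous.sub
      · exact (hcont.comp continuous_fst).add (hcont.comp continuous_snd)
      · exact hcont.comp (continuous_fst.add continuous_snd)
    have hopen : IsOpen {q : ℝ × ℝ | F p / 2 < F q} := isOpen_lt continuous_const hFc
    have hmem : p ∈ {q : ℝ × ℝ | F p / 2 < F q} := by
      simp only [Set.mem_setOf_eq]; linarith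
    obtain ⟨ε, hε, hball⟩ := Metric.isOpen_iff.mp hopen p hmem
    set M : ℝ := dist p ((0 : ℝ), (0 : ℝ)) + ε with hM
    refine ⟨ε / 2, by linarith, (F p / 2) / (M + 1), by positivity, ?_⟩
    intro q hq
    refine ⟨((0 : ℝ), (0 : ℝ)), by simp [Eset, h0], ?_⟩
    have hqM : dist q ((0 : ℝ), (0 : ℝ)) ≤ M := by
      calc dist q ((0:ℝ), (0:ℝ)) ≤ dist q p + dist p ((0:ℝ), (0:ℝ)) := dist_triangle _ _ _
        _ ≤ M := by rw [hM]; linarith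
    have hFq : F p / 2 < F q := hball (by rw [Metric.mem_ball]; linarith)
    have hM0 : 0 ≤ M := le_trans dist_nonneg (by rw [hM]; linarith [dist_nonneg (x := q) (y := p)])
    calc (F p / 2) / (M + 1) * dist q ((0:ℝ), (0:ℝ)) ≤ (F p / 2) / (M + 1) * M := by
          apply mul_le_mul_of_nonneg_left hqM (by positivity)
      _ ≤ F p / 2 := by
          rw [div_mul_eq_mul_div, div_le_iff₀ (by linarith)]
          nlinarith
      _ ≤ F q := by linarith

lemma global_bound {π : ℝ → ℝ} (h0 : π 0 = 0) (hsub : ∀ x y, π (x + y) ≤ π x + π y)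
    (hcont : Continuous π) (hpwl : PiecewiseLinearLocFin π) :
    ∃ c > 0, ∀ q : ℝ × ℝ, q ∈ Set.Icc ((0:ℝ), (0:ℝ)) ((1:ℝ), (1:ℝ)) →
      ∃ e ∈ Eset π, c * dist q e ≤ π q.1 + π q.2 - π (q.1 + q.2) := by
  have H := fun p => point_bound h0 hsub hcont hpwl p
  choose r hr c hc hprop using H
  have hcompact : IsCompact (Set.Icc ((0:ℝ), (0:ℝ)) ((1:ℝ), (1:ℝ))) := isCompact_Icc
  have hcover : Set.Icc ((0:ℝ), (0:ℝ)) ((1:ℝ), (1:ℝ)) ⊆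
      ⋃ p : ℝ × ℝ, Metric.ball p (r p) := by
    intro q _
    exact Set.mem_iUnion.mpr ⟨q, Metric.mem_ball_self (hr q)⟩
  obtain ⟨t, ht⟩ := hcompact.elim_finite_subcover (fun p => Metric.ball p (r p))
    (fun p => Metric.isOpen_ball) hcover
  have htne : t.Nonempty := by
    rcases Finset.eq_empty_or_nonempty t with h | h
    · exfalso
      have := ht (Set.mem_Icc.mpr ⟨⟨le_refl _, le_refl _⟩, ⟨zero_le_one, zero_le_one⟩⟩ :
        ((0:ℝ), (0:ℝ)) ∈ Set.Icc ((0:ℝ), (0:ℝ)) ((1:ℝ), (1:ℝ)))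
      rw [h] at this
      simpa using this
    · exact h
  set cmin : ℝ := t.inf' htne c with hcmin
  have hcmin0 : 0 < cmin := by
    rw [hcmin, Finset.lt_inf'_iff]
    exact fun p _ => hc p
  refine ⟨cmin, hcmin0, ?_⟩
  intro q hq
  have hq2 := ht hq
  rw [Set.mem_iUnion₂] at hq2
  obtain ⟨p, hpt, hqp⟩ := hq2
  obtain ⟨e, he, hineq⟩ := hprop p q (le_of_lt (Metric.mem_ball.mp hqp))
  refine ⟨e, he, ?_⟩
  calc cmin * dist q e ≤ c p * dist q e := by
        apply mul_le_mul_of_nonneg_right _ dist_nonneg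
        exact Finset.inf'_le c hpt
    _ ≤ _ := hineq

theorem extreme_cont_pwl_lipschitz_perturbation (f : ℝ) (hf : ∀ z : ℤ, f ≠ z)
    (π : ℝ → ℝ) (hπ : MinimalValid f π)
    (hcont : Continuous π) (hpwl : PiecewiseLinearLocFin π)
    (hext : ∀ π₁ π₂ : ℝ → ℝ, MinimalValid f π₁ → MinimalValid f π₂ →
      (∀ x, π x = (π₁ x + π₂ x) / 2) → π₁ = π ∧ π₂ = π)
    (π' : ℝ → ℝ) (hπ' : MinimalValid f π')
    (hE : Eset π ⊆ Eset π')
    (hLip : ∃ K : NNReal, LipschitzWith K π')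
    (πb : ℝ → ℝ) (hπb : πb = fun x => π' x - π x)
    (hbLip : ∃ K : NNReal, LipschitzWith K πb)
    (hb0 : πb 0 = 0) (hbf : πb f = 0)
    (hbper : ∀ x, πb (x + 1) = πb x)
    (hbadd : ∀ p ∈ Eset π, πb p.1 + πb p.2 = πb (p.1 + p.2)) :
    (∃ ε : ℝ, 0 < ε ∧ MinimalValid f (fun x => π x + ε * πb x) ∧
      MinimalValid f (fun x => π x - ε * πb x)) ∧ πb = 0 ∧ π' = π := by
  obtain ⟨hnn, h0, hsubπ, hperπ, hsymπ⟩ := hπ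
  obtain ⟨hnn', h0', hsubπ', hperπ', hsymπ'⟩ := hπ'
  obtain ⟨K, hK⟩ := hbLip
  set κ : ℝ := (K : ℝ) with hκdef
  have hκ0 : 0 ≤ κ := K.coe_nonneg
  have hbbd : ∀ x, |πb x| ≤ κ := bounded_of_per_lip hK hbper hb0
  have hπbx : ∀ x, πb x = π' x - π x := fun x => by rw [hπb]
  obtain ⟨c, hc, G⟩ := global_bound h0 hsubπ hcont hpwl
  set ε : ℝ := min 1 (c / (4 * κ + 1)) with hεdef
  have hε0 : 0 < ε := lt_min one_pos (by positivity)
  have hε1 : ε ≤ 1 := min_le_left _ _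
  have hεc : ε * (4 * κ + 1) ≤ c := by
    have h1 : ε ≤ c / (4 * κ + 1) := min_le_right _ _
    rw [le_div_iff₀ (by positivity)] at h1
    exact h1
  -- master inequality
  have master : ∀ x y : ℝ, ε * (πb x + πb y - πb (x + y)) ≤ π x + π y - π (x + y) := by
    intro x y
    set x' : ℝ := Int.fract x with hx'
    set y' : ℝ := Int.fract y with hy'
    have hfx : x' = x - (⌊x⌋ : ℤ) := (Int.self_sub_floor x).symm
    have hfy : y' = y - (⌊y⌋ : ℤ) := (Int.self_sub_floor y).symm
    have hπ1 : π x = π x' := periodic_fract hperπ x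
    have hπ2 : π y = π y' := periodic_fract hperπ y
    have hb1 : πb x = πb x' := periodic_fract hbper x
    have hb2 : πb y = πb y' := periodic_fract hbper y
    have hargsum : x + y = (x' + y') + ((⌊x⌋ + ⌊y⌋ : ℤ) : ℝ) := by
      rw [hfx, hfy]; push_cast; ring
    have hπ3 : π (x + y) = π (x' + y') := by
      rw [hargsum, periodic_int' hperπ (⌊x⌋ + ⌊y⌋) (x' + y')]
    have hb3 : πb (x + y) = πb (x' + y') := by
      rw [hargsum, periodic_int' hbper (⌊x⌋ + ⌊y⌋) (x' + y')]
    rw [hπ1, hπ2, hπ3, hb1, hb2, hb3]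
    have hqmem : ((x', y') : ℝ × ℝ) ∈ Set.Icc ((0:ℝ), (0:ℝ)) ((1:ℝ), (1:ℝ)) := by
      constructor
      · exact ⟨Int.fract_nonneg x, Int.fract_nonneg y⟩
      · exact ⟨le_of_lt (Int.fract_lt_one x), le_of_lt (Int.fract_lt_one y)⟩
    obtain ⟨e, he, hcd0⟩ := G (x', y') hqmem
    have hcd : c * dist ((x', y') : ℝ × ℝ) e ≤ π x' + π y' - π (x' + y') := hcd0
    have hbe : πb e.1 + πb e.2 = πb (e.1 + e.2) := hbadd e he
    set d : ℝ := dist ((x', y') : ℝ × ℝ) e with hd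
    have hd0 : 0 ≤ d := dist_nonneg
    have hd1 : |x' - e.1| ≤ d := by
      rw [hd, Prod.dist_eq, Real.dist_eq, Real.dist_eq]
      exact le_max_left _ _
    have hd2 : |y' - e.2| ≤ d := by
      rw [hd, Prod.dist_eq, Real.dist_eq, Real.dist_eq]
      exact le_max_right _ _
    have lip1 : |πb x' - πb e.1| ≤ κ * |x' - e.1| := by
      have := hK.dist_le_mul x' e.1
      rwa [Real.dist_eq, Real.dist_eq] at this
    have lip2 : |πb y' - πb e.2| ≤ κ * |y' - e.2| := by
      have := hK.dist_le_mul y' e.2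
      rwa [Real.dist_eq, Real.dist_eq] at this
    have lip3 : |πb (x' + y') - πb (e.1 + e.2)| ≤ κ * |(x' + y') - (e.1 + e.2)| := by
      have := hK.dist_le_mul (x' + y') (e.1 + e.2)
      rwa [Real.dist_eq, Real.dist_eq] at this
    have habs3 : |(x' + y') - (e.1 + e.2)| ≤ |x' - e.1| + |y' - e.2| := by
      have : (x' + y') - (e.1 + e.2) = (x' - e.1) + (y' - e.2) := by ring
      rw [this]; exact abs_add_le _ _
    have hDb : πb x' + πb y' - πb (x' + y') ≤ 4 * κ * d := by
      have a1 : πb x' - πb e.1 ≤ κ * |x' - e.1| := le_trans (le_abs_self _) lip1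
      have a2 : πb y' - πb e.2 ≤ κ * |y' - e.2| := le_trans (le_abs_self _) lip2
      have a3 := (abs_le.mp lip3).1
      have b1 : κ * |x' - e.1| ≤ κ * d := mul_le_mul_of_nonneg_left hd1 hκ0
      have b2 : κ * |y' - e.2| ≤ κ * d := mul_le_mul_of_nonneg_left hd2 hκ0
      have b3 : κ * |(x' + y') - (e.1 + e.2)| ≤ κ * (2 * d) := by
        apply mul_le_mul_of_nonneg_left _ hκ0
        linarith
      linarith
    rcases le_total (πb x' + πb y' - πb (x' + y')) 0 with hD | hD
    · have : ε * (πb x' + πb y' - πb (x' + y')) ≤ 0 := mul_nonpos_of_nonneg_of_nonpos hε0.le hD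
      have hΔ0 : 0 ≤ π x' + π y' - π (x' + y') := by linarith [hsubπ x' y']
      linarith
    · have s1 : ε * (πb x' + πb y' - πb (x' + y')) ≤ ε * (4 * κ * d) :=
        mul_le_mul_of_nonneg_left hDb hε0.le
      have s2 : ε * (4 * κ * d) ≤ c * d := by
        have t1 : ε * (4 * κ) ≤ c := by linarith [hεc, hε0.le]
        have t2 : ε * (4 * κ) * d ≤ c * d := mul_le_mul_of_nonneg_right t1 hd0
        linarith [t2]
      linarith
  -- symmetry facts
  have hπf : π f = 1 := by have := hsymπ 0; simp [h0] at this; linarith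
  have hExf : ∀ x : ℝ, ((x, f - x) : ℝ × ℝ) ∈ Eset π := by
    intro x
    have harg : x + (f - x) = f := by ring
    show π x + π (f - x) = π (x + (f - x))
    rw [harg, hπf]
    exact hsymπ x
  have hbsym : ∀ x : ℝ, πb x + πb (f - x) = 0 := by
    intro x
    have := hbadd _ (hExf x)
    simp only at this
    have harg : x + (f - x) = f := by ring
    rw [harg, hbf] at this
    exact this
  -- minimal validity of the two perturbed functions
  have hsubP : ∀ x y : ℝ, (π (x + y) + ε * πb (x + y)) ≤ (π x + ε * πb x) + (π y + ε * πb y) := by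
    intro x y
    have h1 := hsubπ x y
    have h2 := hsubπ' x y
    have e1 := hπbx x
    have e2 := hπbx y
    have e3 := hπbx (x + y)
    have key : (1 - ε) * (π x + π y - π (x + y)) + ε * (π' x + π' y - π' (x + y)) ≥ 0 := by
      have p1 : 0 ≤ (1 - ε) * (π x + π y - π (x + y)) :=
        mul_nonneg (by linarith) (by linarith)
      have p2 : 0 ≤ ε * (π' x + π' y - π' (x + y)) := mul_nonneg hε0.le (by linarith)
      linarith
    nlinarith [key]
  have hsubM : ∀ x y : ℝ, (π (x + y) - ε * πb (x + y)) ≤ (π x - ε * πb x) + (π y - ε * πb y) := by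
    intro x y
    have := master x y
    nlinarith [this]
  have hbddP : ∀ x, -(κ + 1) ≤ π x + ε * πb x := by
    intro x
    have h1 := hnn x
    have h2 := abs_le.mp (hbbd x)
    rcases le_total 0 (πb x) with h3 | h3
    · nlinarith
    · nlinarith
  have hbddM : ∀ x, -(κ + 1) ≤ π x - ε * πb x := by
    intro x
    have h1 := hnn x
    have h2 := abs_le.mp (hbbd x)
    rcases le_total 0 (πb x) with h3 | h3
    · nlinarith
    · nlinarith
  have hminP : MinimalValid f (fun x => π x + ε * πb x) := by
    refine ⟨?_, by simp [h0, hb0], hsubP, ?_, ?_⟩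
    · exact nonneg_of_subadd (by simp [h0, hb0]) hsubP (κ + 1) hbddP
    · intro x; simp only; rw [hperπ, hbper]
    · intro x
      simp only
      have := hbsym x
      have := hsymπ x
      nlinarith [this]
  have hminM : MinimalValid f (fun x => π x - ε * πb x) := by
    refine ⟨?_, by simp [h0, hb0], hsubM, ?_, ?_⟩
    · exact nonneg_of_subadd (by simp [h0, hb0]) hsubM (κ + 1) hbddM
    · intro x; simp only; rw [hperπ, hbper]
    · intro x
      simp only
      have := hbsym x
      have := hsymπ x
      nlinarith [this]
  obtain ⟨hP, hM⟩ := hext _ _ hminP hminM (fun x => by ring)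
  have hbz : πb = 0 := by
    funext x
    have := congrFun hP x
    have : ε * πb x = 0 := by linarith
    have := (mul_eq_zero.mp this).resolve_left (ne_of_gt hε0)
    simpa using this
  refine ⟨⟨ε, hε0, hminP, hminM⟩, hbz, ?_⟩
  funext x
  have := congrFun hbz x
  rw [hπbx x] at this
  simp only [Pi.zero_apply] at this
  linarith
end
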